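/- arXiv:0708.1043 — 2 statements merged into one kernel-verified Lean document; each statement's English description precedes it below -/
import Mathlib

section
/- With a(μ)=1 and d(μ) = Π_{m=1}^{M} sinh(μ-ξ_m)/sinh(μ-ξ_m+η), if parameters λ_1,...,λ_N satisfy the Bethe equations (-1)^{N+1} = d(λ_j) Π_{k≠j} [sinh(λ_j-λ_k+η) sinh(λ_k-λ_j)] / [sinh(λ_j-λ_k) sinh(λ_k-λ_j+η)] for all j, then the function τ(μ) = Π_{j=1}^{N} sinh(λ_j-μ+η)/sinh(λ_j-μ) + (-1)^{N+1} d(μ) Π_{j=1}^{N} sinh(μ-λ_j+η)/sinh(μ-λ_j) has no pole at μ = λ_j for each j; i.e., the residue of τ at μ = λ_j vanishes. -/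
open BigOperators Finset
open Filter Complex Topology

lemma aux_cancel (c dA pA pB pC pD sη : ℂ) (hc2 : c * c = 1)
    (hBe : c * (pC * pD) = dA * (pA * pB)) (hPB : pB ≠ 0) (hPC : pC ≠ 0) :
    (-1 : ℂ) * (sη * (pD / pB)) + c * dA * (1 * (sη * (pA / pC))) = 0 := by
  field_simp
  linear_combination (-sη * c) * hBe + (sη * pC * pD) * hc2


/-- If the Bethe equations hold, the transfer matrix eigenvalue τ(μ) has no pole
    at μ = λ_j: the residue (μ - λ_j) τ(μ) tends to 0 as μ → λ_j. -/
theorem tau_no_pole (M N : ℕ) (η : ℂ) (ξ : Fin M → ℂ) (lam : Fin N → ℂ)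
    (hinj : Function.Injective lam)
    (hη : Complex.sinh η ≠ 0)
    (hll : ∀ j k : Fin N, j ≠ k → Complex.sinh (lam j - lam k) ≠ 0)
    (hllη : ∀ j k : Fin N, j ≠ k → Complex.sinh (lam j - lam k + η) ≠ 0)
    (hlξ : ∀ (j : Fin N) (m : Fin M),
      Complex.sinh (lam j - ξ m) ≠ 0 ∧ Complex.sinh (lam j - ξ m + η) ≠ 0)
    (d : ℂ → ℂ)
    (hd : ∀ μ, d μ = ∏ m, Complex.sinh (μ - ξ m) / Complex.sinh (μ - ξ m + η))
    (hBethe : ∀ j : Fin N, ((-1 : ℂ)) ^ (N + 1) =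
      d (lam j) * ∏ k ∈ Finset.univ.erase j,
        (Complex.sinh (lam j - lam k + η) * Complex.sinh (lam k - lam j)) /
          (Complex.sinh (lam j - lam k) * Complex.sinh (lam k - lam j + η)))
    (τ : ℂ → ℂ)
    (hτ : ∀ μ, τ μ =
      (∏ j, Complex.sinh (lam j - μ + η) / Complex.sinh (lam j - μ)) +
      ((-1 : ℂ)) ^ (N + 1) * d μ *
        ∏ j, Complex.sinh (μ - lam j + η) / Complex.sinh (μ - lam j))
    (j : Fin N) :
    Filter.Tendsto (fun μ => (μ - lam j) * τ μ)
      (nhdsWithin (lam j) {lam j}ᶜ) (nhds 0) := by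
  set a := lam j with ha
  set c : ℂ := (-1) ^ (N + 1) with hc
  set P1 : ℂ → ℂ := fun μ => ∏ k ∈ Finset.univ.erase j,
      Complex.sinh (lam k - μ + η) / Complex.sinh (lam k - μ) with hP1
  set P2 : ℂ → ℂ := fun μ => ∏ k ∈ Finset.univ.erase j,
      Complex.sinh (μ - lam k + η) / Complex.sinh (μ - lam k) with hP2
  set F : ℂ → ℂ := fun μ =>
      ((μ - a) / Complex.sinh (a - μ)) * (Complex.sinh (a - μ + η) * P1 μ) +
      c * d μ * (((μ - a) / Complex.sinh (μ - a)) *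
        (Complex.sinh (μ - a + η) * P2 μ)) with hF
  -- slope limit
  have hslope : Tendsto (fun z : ℂ => Complex.sinh z / z) (𝓝[≠] (0:ℂ)) (𝓝 1) := by
    have h := (Complex.hasDerivAt_sinh 0)
    rw [hasDerivAt_iff_tendsto_slope] at h
    have he : (fun z : ℂ => Complex.sinh z / z) = slope Complex.sinh 0 := by
      funext z; simp [slope_def_field]
    rw [he]; simpa using h
  have hmap : Tendsto (fun μ : ℂ => μ - a) (𝓝[≠] a) (𝓝[≠] (0:ℂ)) := by
    rw [tendsto_nhdsWithin_iff]
    constructor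
    · have := ((continuous_sub_right (a:ℂ)).tendsto a).mono_left (nhdsWithin_le_nhds : 𝓝[≠] a ≤ 𝓝 a)
      simpa using this
    · filter_upwards [self_mem_nhdsWithin] with μ hμ
      exact fun h => hμ (sub_eq_zero.mp h)
  have hz : Tendsto (fun z : ℂ => z / Complex.sinh z) (𝓝[≠] (0:ℂ)) (𝓝 1) := by
    have := hslope.inv₀ one_ne_zero
    simpa [inv_div] using this
  have h1 : Tendsto (fun μ : ℂ => (μ - a) / Complex.sinh (μ - a)) (𝓝[≠] a) (𝓝 1) :=
    hz.comp hmap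
  have hne : ∀ᶠ μ in 𝓝[≠] a, Complex.sinh (μ - a) ≠ 0 := by
    have hq : Tendsto (fun μ : ℂ => Complex.sinh (μ - a) / (μ - a)) (𝓝[≠] a) (𝓝 1) :=
      hslope.comp hmap
    filter_upwards [hq.eventually_ne one_ne_zero] with μ hμ h0
    exact hμ (by simp [h0])
  -- eventual equality
  have key : ∀ (x s' u p1 dm s v p2 : ℂ), s' ≠ 0 → s ≠ 0 →
      x * (u / s' * p1 + c * dm * (v / s * p2)) =
      (x / s') * (u * p1) + c * dm * (x / s * (v * p2)) := by
    intro x s' u p1 dm s v p2 h1 h2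
    field_simp
  have heq : ∀ᶠ μ in 𝓝[≠] a, (μ - a) * τ μ = F μ := by
    filter_upwards [hne] with μ hs
    have hs' : Complex.sinh (a - μ) ≠ 0 := by
      rw [show a - μ = -(μ - a) by ring, Complex.sinh_neg]
      simpa using hs
    rw [hτ μ, ← Finset.mul_prod_erase univ _ (mem_univ j),
        ← Finset.mul_prod_erase univ
          (fun k => Complex.sinh (μ - lam k + η) / Complex.sinh (μ - lam k)) (mem_univ j)]
    simp only [hF, hP1, hP2]
    exact key (μ - a) _ _ _ _ _ _ _ hs' hs
  -- continuity helpers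
  have hsc1 : ∀ b e : ℂ, Tendsto (fun μ : ℂ => Complex.sinh (b - μ + e)) (𝓝 a)
      (𝓝 (Complex.sinh (b - a + e))) :=
    fun b e => (Complex.continuous_sinh.comp
      (((continuous_const.sub continuous_id).add continuous_const))).tendsto a
  have hsc2 : ∀ b e : ℂ, Tendsto (fun μ : ℂ => Complex.sinh (μ - b + e)) (𝓝 a)
      (𝓝 (Complex.sinh (a - b + e))) :=
    fun b e => (Complex.continuous_sinh.comp
      (((continuous_id.sub continuous_const).add continuous_const))).tendsto a
  have hsc1' : ∀ b : ℂ, Tendsto (fun μ : ℂ => Complex.sinh (b - μ)) (𝓝 a)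
      (𝓝 (Complex.sinh (b - a))) :=
    fun b => (Complex.continuous_sinh.comp
      ((continuous_const.sub continuous_id))).tendsto a
  have hsc2' : ∀ b : ℂ, Tendsto (fun μ : ℂ => Complex.sinh (μ - b)) (𝓝 a)
      (𝓝 (Complex.sinh (a - b))) :=
    fun b => (Complex.continuous_sinh.comp
      ((continuous_id.sub continuous_const))).tendsto a
  have hP1c : Tendsto P1 (𝓝 a) (𝓝 (P1 a)) := by
    apply tendsto_finset_prod
    intro k hk
    exact (hsc1 (lam k) η).div (hsc1' (lam k)) (hll k j (Finset.ne_of_mem_erase hk))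
  have hP2c : Tendsto P2 (𝓝 a) (𝓝 (P2 a)) := by
    apply tendsto_finset_prod
    intro k hk
    exact (hsc2 (lam k) η).div (hsc2' (lam k)) (hll j k (Finset.ne_of_mem_erase hk).symm)
  have hdc : Tendsto d (𝓝 a) (𝓝 (d a)) := by
    have hde : d = fun μ => ∏ m, Complex.sinh (μ - ξ m) / Complex.sinh (μ - ξ m + η) := by
      funext μ; exact hd μ
    rw [hde]
    apply tendsto_finset_prod
    intro m _
    exact (hsc2' (ξ m)).div (hsc2 (ξ m) η) (hlξ j m).2
  have h1' : Tendsto (fun μ : ℂ => (μ - a) / Complex.sinh (a - μ)) (𝓝[≠] a) (𝓝 (-1)) := by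
    have he : (fun μ : ℂ => (μ - a) / Complex.sinh (a - μ))
        = fun μ => -((μ - a) / Complex.sinh (μ - a)) := by
      funext μ
      rw [show a - μ = -(μ - a) by ring, Complex.sinh_neg, div_neg]
    rw [he]
    simpa using h1.neg
  -- the limit of F
  have hFlim : Tendsto F (𝓝[≠] a) (𝓝 ((-1) * (Complex.sinh (a - a + η) * P1 a) +
      c * d a * (1 * (Complex.sinh (a - a + η) * P2 a)))) := by
    apply Filter.Tendsto.add
    · exact h1'.mul ((((hsc1 a η).mul hP1c)).mono_left nhdsWithin_le_nhds)
    · exact ((hdc.const_mul c).mono_left nhdsWithin_le_nhds).mul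
        (h1.mul ((((hsc2 a η).mul hP2c)).mono_left nhdsWithin_le_nhds))
  -- the limit is zero
  have hL : ((-1 : ℂ)) * (Complex.sinh (a - a + η) * P1 a) +
      c * d a * (1 * (Complex.sinh (a - a + η) * P2 a)) = 0 := by
    have hPA : (∏ k ∈ univ.erase j, Complex.sinh (a - lam k + η)) ≠ 0 :=
      Finset.prod_ne_zero_iff.mpr fun k hk => hllη j k (Finset.ne_of_mem_erase hk).symm
    have hPB : (∏ k ∈ univ.erase j, Complex.sinh (lam k - a)) ≠ 0 :=
      Finset.prod_ne_zero_iff.mpr fun k hk => hll k j (Finset.ne_of_mem_erase hk)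
    have hPC : (∏ k ∈ univ.erase j, Complex.sinh (a - lam k)) ≠ 0 :=
      Finset.prod_ne_zero_iff.mpr fun k hk => hll j k (Finset.ne_of_mem_erase hk).symm
    have hPD : (∏ k ∈ univ.erase j, Complex.sinh (lam k - a + η)) ≠ 0 :=
      Finset.prod_ne_zero_iff.mpr fun k hk => hllη k j (Finset.ne_of_mem_erase hk)
    have hB := hBethe j
    rw [← ha] at hB
    have hBe : c * ((∏ k ∈ univ.erase j, Complex.sinh (a - lam k)) *
        (∏ k ∈ univ.erase j, Complex.sinh (lam k - a + η))) =
        d a * ((∏ k ∈ univ.erase j, Complex.sinh (a - lam k + η)) *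
        (∏ k ∈ univ.erase j, Complex.sinh (lam k - a))) := by
      rw [hB, Finset.prod_div_distrib, Finset.prod_mul_distrib, Finset.prod_mul_distrib]
      field_simp
    have hc2 : c * c = 1 := by
      rw [hc]; rw [← pow_add]
      rw [show (N + 1) + (N + 1) = 2 * (N + 1) by ring, pow_mul]
      norm_num
    have hP1a : P1 a = (∏ k ∈ univ.erase j, Complex.sinh (lam k - a + η)) /
        (∏ k ∈ univ.erase j, Complex.sinh (lam k - a)) := by
      simp only [hP1]; exact Finset.prod_div_distrib _ _
    have hP2a : P2 a = (∏ k ∈ univ.erase j, Complex.sinh (a - lam k + η)) /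
        (∏ k ∈ univ.erase j, Complex.sinh (a - lam k)) := by
      simp only [hP2]; exact Finset.prod_div_distrib _ _
    rw [hP1a, hP2a]
    simp only [sub_self, zero_add]
    exact aux_cancel c (d a) _ _ _ _ _ hc2 hBe hPB hPC
  rw [← hL]
  exact hFlim.congr' (heq.mono fun _ h => h.symm)
end

section
/- If e^{ik} = φ(λ) = sinh(λ - iπ/4)/sinh(λ + iπ/4) for real λ and k, then cos k = -1/cosh(2λ). -/
open Complex

/-- If e^{ik} = sinh(λ - iπ/4)/sinh(λ + iπ/4) for real λ, k, then
    cos k = -1/cosh(2λ). -/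
theorem cos_of_phi (lam k : ℝ)
    (h : Complex.exp (Complex.I * k) =
        Complex.sinh ((lam : ℂ) - Complex.I * Real.pi / 4) /
          Complex.sinh ((lam : ℂ) + Complex.I * Real.pi / 4)) :
    Real.cos k = -1 / Real.cosh (2 * lam) := by
  set s := Real.sinh lam with hs
  set c := Real.cosh lam with hcdef
  have hcpos : 0 < c := Real.cosh_pos lam
  have hr2 : ((Real.sqrt 2 / 2 : ℝ) : ℂ) ≠ 0 := by
    simp only [ne_eq, Complex.ofReal_eq_zero]
    positivity
  have hrw : (Complex.I * Real.pi / 4 : ℂ) = ((Real.pi / 4 : ℝ) : ℂ) * Complex.I := by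
    push_cast
    ring
  have hplus : Complex.sinh ((lam : ℂ) + Complex.I * Real.pi / 4)
      = ((Real.sqrt 2 / 2 : ℝ) : ℂ) * ((s : ℂ) + (c : ℂ) * Complex.I) := by
    rw [hrw, Complex.sinh_add, Complex.sinh_mul_I, Complex.cosh_mul_I,
      ← Complex.ofReal_sinh, ← Complex.ofReal_cosh, ← Complex.ofReal_cos,
      ← Complex.ofReal_sin, Real.cos_pi_div_four, Real.sin_pi_div_four]
    simp only [hs, hcdef, Complex.ofReal_sinh, Complex.ofReal_cosh, Complex.ofReal_div]; ring
  have hminus : Complex.sinh ((lam : ℂ) - Complex.I * Real.pi / 4)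
      = ((Real.sqrt 2 / 2 : ℝ) : ℂ) * ((s : ℂ) - (c : ℂ) * Complex.I) := by
    rw [hrw, Complex.sinh_sub, Complex.sinh_mul_I, Complex.cosh_mul_I,
      ← Complex.ofReal_sinh, ← Complex.ofReal_cosh, ← Complex.ofReal_cos,
      ← Complex.ofReal_sin, Real.cos_pi_div_four, Real.sin_pi_div_four]
    simp only [hs, hcdef, Complex.ofReal_sinh, Complex.ofReal_cosh, Complex.ofReal_div]; ring
  rw [hplus, hminus, mul_div_mul_left _ _ hr2] at h
  have hden : ((s : ℂ) + (c : ℂ) * Complex.I) ≠ 0 := by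
    intro h0
    have := congrArg Complex.im h0
    simp at this
    exact absurd this (ne_of_gt hcpos)
  rw [eq_div_iff hden] at h
  have hexp : Complex.exp (Complex.I * k) = (Real.cos k : ℂ) + (Real.sin k : ℂ) * Complex.I := by
    rw [mul_comm, Complex.exp_mul_I, ← Complex.ofReal_cos, ← Complex.ofReal_sin]
  rw [hexp] at h
  have hre := congrArg Complex.re h
  have him := congrArg Complex.im h
  simp [Complex.add_re, Complex.mul_re, Complex.mul_im] at hre him
  rw [Complex.cos_ofReal_re, Complex.sin_ofReal_re] at hre him
  have hsq : c ^ 2 - s ^ 2 = 1 := by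
    rw [hs, hcdef]; exact Real.cosh_sq_sub_sinh_sq lam
  have hc2 : Real.cosh (2 * lam) = s ^ 2 + c ^ 2 := by
    rw [two_mul, Real.cosh_add, hs, hcdef]; ring
  have hpos : 0 < Real.cosh (2 * lam) := Real.cosh_pos _
  rw [eq_div_iff (ne_of_gt hpos), hc2]
  linear_combination s * hre + c * him - hsq
end
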